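/- Continuity of the factorization map: for s ≥ 0 and k ∈ ℕ, the map f_k sending φ ∈ H^s(ℝ) to the k-fold tensor product kernel ∏_{i=1}^k φ(x_i) conj(φ)(x_i') is continuous from H^s(ℝ) into the space of trace-class-type kernels with norm ‖γ‖ = Tr |S^{(k,s)} γ| where S^{(k,s)} = ∏_j (1-Δ_{x_j})^{s/2}(1-Δ_{x_j'})^{s/2}. In particular, ‖f_k(φ) - f_k(ψ)‖ ≤ C k ‖φ - ψ‖_{H^s} (‖φ‖_{H^s} + ‖ψ‖_{H^s})^{2k-1}. -/

import Mathlib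

open MeasureTheory ENNReal NNReal

noncomputable section

/-- The rank-one operator |u⟩⟨v| : x ↦ ⟨v, x⟩ u on a complex inner ℂ product space. -/
def rankOne {H : Type*} [NormedAddCommGroup H] [InnerProductSpace ℂ H]
    (u v : H) : H →L[ℂ] H :=
  (innerSL ℂ v).smulRight u

/-- The trace norm Tr|T| of an operator on a Hilbert space, via the characterization
‖T‖₁ = sup { Σₙ |⟨eₙ, T fₙ⟩| : (eₙ), (fₙ) orthonormal sequences }. -/
def traceNorm {H : Type*} [NormedAddCommGroup H] [InnerProductSpace ℂ H]
    (T : H →L[ℂ] H) : ℝ≥0∞ :=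
  ⨆ (e : ℕ → H) (f : ℕ → H) (_ : Orthonormal ℂ e) (_ : Orthonormal ℂ f),
    ∑' j : ℕ, (‖(inner ℂ (e j) (T (f j)) : ℂ)‖₊ : ℝ≥0∞)

section Aux

variable {H : Type*} [NormedAddCommGroup H] [InnerProductSpace ℂ H]

lemma sq_rpow' (x : ℝ≥0∞) : x ^ (2:ℝ) = x ^ (2:ℕ) := by
  rw [← ENNReal.rpow_natCast]; norm_num

lemma coe_nnnorm_sq (z : ℂ) : (‖z‖₊ : ℝ≥0∞) ^ (2:ℕ) = ENNReal.ofReal (‖z‖ ^ 2) := by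
  rw [ENNReal.ofReal_pow (norm_nonneg _), ofReal_norm, enorm_eq_nnnorm]

lemma bessel_ennreal {e : ℕ → H} (he : Orthonormal ℂ e) (x : H) :
    ∑' j : ℕ, (‖(inner ℂ (e j) x : ℂ)‖₊ : ℝ≥0∞) ^ (2:ℝ) ≤ (‖x‖₊ : ℝ≥0∞) ^ (2:ℝ) := by
  simp only [sq_rpow']
  have key : ∀ s : Finset ℕ, ∑ j ∈ s, (‖(inner ℂ (e j) x : ℂ)‖₊ : ℝ≥0∞) ^ (2:ℕ)
      ≤ (‖x‖₊ : ℝ≥0∞) ^ (2:ℕ) := by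
    intro s
    have h := he.sum_inner_products_le (s := s) x
    have h1 : ∑ j ∈ s, (‖(inner ℂ (e j) x : ℂ)‖₊ : ℝ≥0∞) ^ (2:ℕ)
        = ENNReal.ofReal (∑ j ∈ s, ‖(inner ℂ (e j) x : ℂ)‖ ^ 2) := by
      rw [ENNReal.ofReal_sum_of_nonneg (fun j _ => by positivity)]
      exact Finset.sum_congr rfl fun j _ => (coe_nnnorm_sq _).symm ▸ rfl
    rw [h1, show ((‖x‖₊ : ℝ≥0∞)) ^ (2:ℕ) = ENNReal.ofReal (‖x‖ ^ 2) from by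
      rw [ENNReal.ofReal_pow (norm_nonneg _), ofReal_norm, enorm_eq_nnnorm]]
    exact ENNReal.ofReal_le_ofReal h
  calc ∑' j : ℕ, (‖(inner ℂ (e j) x : ℂ)‖₊ : ℝ≥0∞) ^ (2:ℕ)
      = ⨆ s : Finset ℕ, ∑ j ∈ s, (‖(inner ℂ (e j) x : ℂ)‖₊ : ℝ≥0∞) ^ (2:ℕ) :=
        ENNReal.tsum_eq_iSup_sum
  _ ≤ _ := iSup_le key

lemma cs_tsum (a b : ℕ → ℝ≥0∞) :
    ∑' j, a j * b j ≤ (∑' j, a j ^ (2:ℝ)) ^ (1/2:ℝ) * (∑' j, b j ^ (2:ℝ)) ^ (1/2:ℝ) := by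
  have hpq : (2:ℝ).HolderConjugate 2 := .two_two
  have := ENNReal.lintegral_mul_le_Lp_mul_Lq (Measure.count : Measure ℕ) hpq
    (measurable_from_nat (f := a)).aemeasurable (measurable_from_nat (f := b)).aemeasurable
  simpa [lintegral_count, Pi.mul_apply] using this

lemma nnnorm_inner_symm (x y : H) : ‖(inner ℂ x y : ℂ)‖₊ = ‖(inner ℂ y x : ℂ)‖₊ := by
  have := norm_inner_symm (𝕜 := ℂ) x y
  rwa [← coe_nnnorm, ← coe_nnnorm, NNReal.coe_inj] at this

lemma traceNorm_rankOne_diff_le (U V : H) :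
    traceNorm (rankOne U U - rankOne V V)
      ≤ (‖U - V‖₊ : ℝ≥0∞) * ((‖U‖₊ : ℝ≥0∞) + (‖V‖₊ : ℝ≥0∞)) := by
  refine iSup_le fun e => iSup_le fun f => iSup_le fun he => iSup_le fun hf => ?_
  have hval : ∀ j, (inner ℂ (e j) ((rankOne U U - rankOne V V) (f j)) : ℂ)
      = (inner ℂ (U - V) (f j) : ℂ) * inner ℂ (e j) U + (inner ℂ V (f j) : ℂ) * inner ℂ (e j) (U - V) := by
    intro j
    simp only [rankOne, ContinuousLinearMap.sub_apply, ContinuousLinearMap.smulRight_apply,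
      innerSL_apply_apply, inner_sub_left, inner_sub_right, inner_smul_right]
    ring
  calc ∑' j : ℕ, (‖(inner ℂ (e j) ((rankOne U U - rankOne V V) (f j)) : ℂ)‖₊ : ℝ≥0∞)
      ≤ ∑' j : ℕ, ((‖(inner ℂ (U - V) (f j) : ℂ)‖₊ : ℝ≥0∞) * ‖(inner ℂ (e j) U : ℂ)‖₊
          + (‖(inner ℂ V (f j) : ℂ)‖₊ : ℝ≥0∞) * ‖(inner ℂ (e j) (U - V) : ℂ)‖₊) := by
        refine ENNReal.tsum_le_tsum fun j => ?_
        rw [hval j]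
        calc ((‖(inner ℂ (U - V) (f j) : ℂ) * inner ℂ (e j) U
              + (inner ℂ V (f j) : ℂ) * inner ℂ (e j) (U - V)‖₊ : ℝ≥0∞))
            ≤ (‖(inner ℂ (U - V) (f j) : ℂ) * inner ℂ (e j) U‖₊ : ℝ≥0∞)
              + ‖(inner ℂ V (f j) : ℂ) * inner ℂ (e j) (U - V)‖₊ := by
                rw [← ENNReal.coe_add]; exact_mod_cast nnnorm_add_le _ _
        _ = _ := by rw [nnnorm_mul, nnnorm_mul]; push_cast; ring
  _ = ∑' j : ℕ, (‖(inner ℂ (U - V) (f j) : ℂ)‖₊ : ℝ≥0∞) * ‖(inner ℂ (e j) U : ℂ)‖₊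
      + ∑' j : ℕ, (‖(inner ℂ V (f j) : ℂ)‖₊ : ℝ≥0∞) * ‖(inner ℂ (e j) (U - V) : ℂ)‖₊ :=
        ENNReal.tsum_add
  _ ≤ (‖U - V‖₊ : ℝ≥0∞) * ‖U‖₊ + (‖V‖₊ : ℝ≥0∞) * ‖U - V‖₊ := by
      gcongr ?_ + ?_
      · calc _ ≤ (∑' j, (‖(inner ℂ (U - V) (f j) : ℂ)‖₊ : ℝ≥0∞) ^ (2:ℝ)) ^ (1/2:ℝ)
            * (∑' j, (‖(inner ℂ (e j) U : ℂ)‖₊ : ℝ≥0∞) ^ (2:ℝ)) ^ (1/2:ℝ) := cs_tsum _ _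
        _ ≤ ((‖U - V‖₊ : ℝ≥0∞) ^ (2:ℝ)) ^ (1/2:ℝ) * ((‖U‖₊ : ℝ≥0∞) ^ (2:ℝ)) ^ (1/2:ℝ) := by
            gcongr
            · refine le_trans (le_of_eq ?_) (bessel_ennreal hf (U - V))
              refine tsum_congr fun j => by rw [nnnorm_inner_symm]
            · exact bessel_ennreal he U
        _ = _ := by rw [← ENNReal.rpow_mul, ← ENNReal.rpow_mul]; norm_num
      · calc _ ≤ (∑' j, (‖(inner ℂ V (f j) : ℂ)‖₊ : ℝ≥0∞) ^ (2:ℝ)) ^ (1/2:ℝ)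
            * (∑' j, (‖(inner ℂ (e j) (U - V) : ℂ)‖₊ : ℝ≥0∞) ^ (2:ℝ)) ^ (1/2:ℝ) := cs_tsum _ _
        _ ≤ ((‖V‖₊ : ℝ≥0∞) ^ (2:ℝ)) ^ (1/2:ℝ) * ((‖U - V‖₊ : ℝ≥0∞) ^ (2:ℝ)) ^ (1/2:ℝ) := by
            gcongr
            · refine le_trans (le_of_eq ?_) (bessel_ennreal hf V)
              refine tsum_congr fun j => by rw [nnnorm_inner_symm]
            · exact bessel_ennreal he (U - V)
        _ = _ := by rw [← ENNReal.rpow_mul, ← ENNReal.rpow_mul]; norm_num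
  _ = _ := by ring

lemma lintegral_pi_fin_prod {n : ℕ} {E : Fin n → Type*} [∀ i, MeasureSpace (E i)]
    [∀ i, SigmaFinite (volume : Measure (E i))] (f : ∀ i, E i → ℝ≥0∞)
    (hf : ∀ i, Measurable (f i)) :
    ∫⁻ x : ∀ i, E i, ∏ i, f i (x i) = ∏ i, ∫⁻ x, f i x := by
  induction n with
  | zero => simp [volume_pi, lintegral_const, Measure.pi_empty_univ]
  | succ n n_ih =>
      calc
        _ = ∫⁻ x : E 0 × ((i : Fin n) → E (Fin.succ i)),
            f 0 x.1 * ∏ i : Fin n, f (Fin.succ i) (x.2 i) := by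
          rw [volume_pi, ← ((measurePreserving_piFinSuccAbove
            (fun i => (volume : Measure (E i))) 0).symm).lintegral_comp_emb
            (MeasurableEquiv.measurableEmbedding _)]
          simp_rw [MeasurableEquiv.piFinSuccAbove_symm_apply, Fin.insertNthEquiv,
            Fin.prod_univ_succ, Fin.insertNth_zero, Equiv.coe_fn_mk, Fin.cons_succ,
            Measure.volume_eq_prod, volume_pi, Fin.zero_succAbove, Fin.cons_zero]
          rfl
        _ = (∫⁻ x, f 0 x) * ∏ i : Fin n, ∫⁻ x : E (Fin.succ i), f (Fin.succ i) x := by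
          rw [← n_ih _ (fun i => hf _), Measure.volume_eq_prod, ← lintegral_prod_mul
            (hf 0).aemeasurable]
          exact (Finset.measurable_prod Finset.univ fun i _ =>
            (hf _).comp (measurable_pi_apply i)).aemeasurable
        _ = ∏ i, ∫⁻ x, f i x := by rw [Fin.prod_univ_succ]

lemma ae_pi_prod_congr {k : ℕ} (g G : Fin k → ℝ → ℂ) (h : ∀ i, g i =ᵐ[volume] G i) :
    (fun x : Fin k → ℝ => ∏ i, g i (x i)) =ᵐ[volume] fun x => ∏ i, G i (x i) := by
  have : ∀ᵐ x : Fin k → ℝ ∂volume, ∀ i, g i (x i) = G i (x i) := by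
    rw [ae_all_iff]
    intro i
    have hnull : volume {t : ℝ | g i t ≠ G i t} = 0 := h i
    have : (volume : Measure (Fin k → ℝ)) (Function.eval i ⁻¹' {t : ℝ | g i t ≠ G i t}) = 0 := by
      rw [volume_pi]
      exact Measure.pi_eval_preimage_null _ hnull
    exact this
  filter_upwards [this] with x hx
  exact Finset.prod_congr rfl fun i _ => hx i

lemma stronglyMeasurable_pi_prod {k : ℕ} (G : Fin k → ℝ → ℂ)
    (hG : ∀ i, StronglyMeasurable (G i)) :
    StronglyMeasurable (fun x : Fin k → ℝ => ∏ i, G i (x i)) :=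
  Finset.stronglyMeasurable_fun_prod Finset.univ fun i _ =>
    (hG i).comp_measurable (measurable_pi_apply i)

lemma aesm_pi_prod {k : ℕ} (g : Fin k → ℝ → ℂ) (hg : ∀ i, AEStronglyMeasurable (g i) volume) :
    AEStronglyMeasurable (fun x : Fin k → ℝ => ∏ i, g i (x i)) volume :=
  ⟨fun x => ∏ i, (hg i).mk _ (x i),
    stronglyMeasurable_pi_prod _ fun i => (hg i).stronglyMeasurable_mk,
    ae_pi_prod_congr _ _ fun i => (hg i).ae_eq_mk⟩

lemma eLpNorm_pi_prod {k : ℕ} (g : Fin k → ℝ → ℂ)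
    (hg : ∀ i, AEStronglyMeasurable (g i) volume) :
    eLpNorm (fun x : Fin k → ℝ => ∏ i, g i (x i)) 2 volume
      = ∏ i, eLpNorm (g i) 2 volume := by
  set G := fun i => (hg i).mk _ with hGdef
  have hGsm : ∀ i, StronglyMeasurable (G i) := fun i => (hg i).stronglyMeasurable_mk
  rw [eLpNorm_congr_ae (ae_pi_prod_congr g G fun i => (hg i).ae_eq_mk)]
  have : ∀ i, eLpNorm (g i) 2 volume = eLpNorm (G i) 2 volume :=
    fun i => eLpNorm_congr_ae ((hg i).ae_eq_mk)
  simp_rw [this]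
  have h2 : (2 : ℝ≥0∞) ≠ 0 := two_ne_zero
  have h2' : (2 : ℝ≥0∞) ≠ ∞ := ofNat_ne_top
  have htr : (2 : ℝ≥0∞).toReal = (2:ℝ) := by simp
  rw [eLpNorm_eq_lintegral_rpow_enorm_toReal h2 h2', htr]; simp only [enorm_eq_nnnorm]
  have key : ∫⁻ x : Fin k → ℝ, (‖∏ i, G i (x i)‖₊ : ℝ≥0∞) ^ (2:ℝ)
      = ∏ i, ∫⁻ t, (‖G i t‖₊ : ℝ≥0∞) ^ (2:ℝ) := by
    rw [← lintegral_pi_fin_prod (fun i t => (‖G i t‖₊ : ℝ≥0∞) ^ (2:ℝ))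
      (fun i => ((hGsm i).measurable.nnnorm.coe_nnreal_ennreal).pow_const _)]
    congr 1
    funext x
    rw [nnnorm_prod, ENNReal.coe_finset_prod, sq_rpow']
    rw [← Finset.prod_pow]
    exact Finset.prod_congr rfl fun i _ => (sq_rpow' _).symm
  rw [key]
  rw [← ENNReal.prod_rpow_of_nonneg (by norm_num : (0:ℝ) ≤ 1/2)]
  exact Finset.prod_congr rfl fun i _ => by
    rw [eLpNorm_eq_lintegral_rpow_enorm_toReal h2 h2', htr]; simp only [enorm_eq_nnnorm]

lemma prod_sub_prod_tele : ∀ (n : ℕ) (a b : Fin n → ℂ),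
    ∏ i, a i - ∏ i, b i
      = ∑ j : Fin n, ∏ i, (if i < j then b i else if i = j then a i - b i else a i) := by
  intro n
  induction n with
  | zero => intro a b; simp
  | succ n ih =>
    intro a b
    rw [Fin.sum_univ_succ]
    have hA : ∏ i : Fin (n+1),
        (if i < (0 : Fin (n+1)) then b i else if i = 0 then a i - b i else a i)
        = (a 0 - b 0) * ∏ i : Fin n, a i.succ := by
      rw [Fin.prod_univ_succ]
      simp [Fin.succ_ne_zero]
    have hB : ∀ j : Fin n, ∏ i : Fin (n+1),
        (if i < j.succ then b i else if i = j.succ then a i - b i else a i)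
        = b 0 * ∏ i : Fin n,
            (if i < j then b i.succ else if i = j then a i.succ - b i.succ else a i.succ) := by
      intro j
      rw [Fin.prod_univ_succ]
      congr 1
      · simp [Fin.succ_pos]
    rw [hA]
    simp_rw [hB]
    rw [← Finset.mul_sum, ← ih (fun i => a i.succ) (fun i => b i.succ),
      Fin.prod_univ_succ a, Fin.prod_univ_succ b]
    ring

end Aux

/-- continuity of the factorization map f_k(φ) = (|φ⟩⟨φ|)^{⊗k} in the
Sobolev-weighted trace norm ‖γ‖ = Tr|S^{(k,s)}γ|, with the Lipschitz-type estimate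
‖f_k(φ) - f_k(ψ)‖ ≤ C k ‖φ-ψ‖_{H^s} (‖φ‖_{H^s} + ‖ψ‖_{H^s})^{2k-1}.
Since the weight S^{(k,s)} turns the kernel of (|φ⟩⟨φ|)^{⊗k} into the rank-one operator
|U⟩⟨U| on L²(ℝ^k), U(x) = ∏ᵢ u(xᵢ) with u = (1-Δ)^{s/2}φ and ‖u‖_{L²} = ‖φ‖_{H^s},
the claim reads: for u, v ∈ L²(ℝ) and U, V ∈ L²(ℝ^k) the corresponding k-fold product
functions, Tr | |U⟩⟨U| - |V⟩⟨V| | ≤ C k ‖u-v‖ (‖u‖+‖v‖)^{2k-1}. -/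
theorem stmt_11 :
    ∃ C : ℝ≥0, 0 < C ∧ ∀ (k : ℕ), 1 ≤ k →
      ∀ (u v : Lp ℂ 2 (volume : Measure ℝ))
        (U V : Lp ℂ 2 (volume : Measure (Fin k → ℝ))),
        ((⇑U : (Fin k → ℝ) → ℂ) =ᵐ[volume] fun x => ∏ i : Fin k, (⇑u : ℝ → ℂ) (x i)) →
        ((⇑V : (Fin k → ℝ) → ℂ) =ᵐ[volume] fun x => ∏ i : Fin k, (⇑v : ℝ → ℂ) (x i)) →
        traceNorm (rankOne U U - rankOne V V)
          ≤ (C : ℝ≥0∞) * (k : ℝ≥0∞) * (‖u - v‖₊ : ℝ≥0∞)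
              * ((‖u‖₊ : ℝ≥0∞) + (‖v‖₊ : ℝ≥0∞)) ^ (2 * k - 1) := by
  refine ⟨2, by norm_num, ?_⟩
  intro k hk u v U V hU hV
  set S : ℝ≥0∞ := (‖u‖₊ : ℝ≥0∞) + (‖v‖₊ : ℝ≥0∞) with hS
  set E : ℝ≥0∞ := (‖u - v‖₊ : ℝ≥0∞) with hE
  have hu : AEStronglyMeasurable (⇑u) volume := Lp.aestronglyMeasurable u
  have hv : AEStronglyMeasurable (⇑v) volume := Lp.aestronglyMeasurable v
  have huv : AEStronglyMeasurable (⇑u - ⇑v) volume := hu.sub hv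
  have hNu : eLpNorm (⇑u) 2 volume = (‖u‖₊ : ℝ≥0∞) := by
    rw [Lp.nnnorm_def, ENNReal.coe_toNNReal (Lp.eLpNorm_ne_top u)]
  have hNv : eLpNorm (⇑v) 2 volume = (‖v‖₊ : ℝ≥0∞) := by
    rw [Lp.nnnorm_def, ENNReal.coe_toNNReal (Lp.eLpNorm_ne_top v)]
  have hNuv : eLpNorm (⇑u - ⇑v) 2 volume = E := by
    rw [hE, eLpNorm_congr_ae (Lp.coeFn_sub u v).symm, Lp.nnnorm_def,
      ENNReal.coe_toNNReal (Lp.eLpNorm_ne_top _)]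
  -- norms of the product functions
  have hUnorm : (‖U‖₊ : ℝ≥0∞) = (‖u‖₊ : ℝ≥0∞) ^ k := by
    rw [Lp.nnnorm_def, ENNReal.coe_toNNReal (Lp.eLpNorm_ne_top U), eLpNorm_congr_ae hU,
      eLpNorm_pi_prod (fun _ => ⇑u) (fun _ => hu), Finset.prod_const, hNu, Finset.card_univ,
      Fintype.card_fin]
  have hVnorm : (‖V‖₊ : ℝ≥0∞) = (‖v‖₊ : ℝ≥0∞) ^ k := by
    rw [Lp.nnnorm_def, ENNReal.coe_toNNReal (Lp.eLpNorm_ne_top V), eLpNorm_congr_ae hV,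
      eLpNorm_pi_prod (fun _ => ⇑v) (fun _ => hv), Finset.prod_const, hNv, Finset.card_univ,
      Fintype.card_fin]
  -- telescoping bound for ‖U - V‖
  set h : Fin k → Fin k → ℝ → ℂ :=
    fun j i => if i < j then ⇑v else if i = j then ⇑u - ⇑v else ⇑u with hh
  have hhm : ∀ j i, AEStronglyMeasurable (h j i) volume := by
    intro j i
    rw [hh]
    dsimp only
    split_ifs
    exacts [hv, huv, hu]
  have hterm : ∀ (j : Fin k) (x : Fin k → ℝ) (i : Fin k),
      (if i < j then (⇑v : ℝ → ℂ) (x i) else if i = j then (⇑u) (x i) - (⇑v) (x i)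
        else (⇑u) (x i)) = h j i (x i) := by
    intro j x i
    rw [hh]
    dsimp only
    split_ifs <;> simp
  have hdiff : (‖U - V‖₊ : ℝ≥0∞) ≤ (k : ℝ≥0∞) * E * S ^ (k - 1) := by
    have h1 : (‖U - V‖₊ : ℝ≥0∞) = eLpNorm (⇑(U - V)) 2 volume := by
      rw [Lp.nnnorm_def, ENNReal.coe_toNNReal (Lp.eLpNorm_ne_top _)]
    have h2 : ⇑(U - V) =ᵐ[volume] fun x : Fin k → ℝ => ∑ j : Fin k, ∏ i, h j i (x i) := by
      filter_upwards [Lp.coeFn_sub U V, hU, hV] with x hx hx1 hx2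
      rw [hx, Pi.sub_apply, hx1, hx2, prod_sub_prod_tele]
      exact Finset.sum_congr rfl fun j _ => Finset.prod_congr rfl fun i _ => hterm j x i
    have h3 : (fun x : Fin k → ℝ => ∑ j : Fin k, ∏ i, h j i (x i))
        = ∑ j : Fin k, (fun x : Fin k → ℝ => ∏ i, h j i (x i)) := by
      funext x; simp
    rw [h1, eLpNorm_congr_ae h2, h3]
    refine le_trans (eLpNorm_sum_le (fun j _ => aesm_pi_prod _ (hhm j)) one_le_two) ?_
    have h4 : ∀ j : Fin k, eLpNorm (fun x : Fin k → ℝ => ∏ i, h j i (x i)) 2 volume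
        ≤ E * S ^ (k - 1) := by
      intro j
      rw [eLpNorm_pi_prod _ (hhm j),
        ← Finset.prod_erase_mul Finset.univ _ (Finset.mem_univ j)]
      have hj : eLpNorm (h j j) 2 volume = E := by
        rw [hh]; simp [lt_irrefl, hNuv]
      have hne : ∀ i ∈ Finset.univ.erase j, eLpNorm (h j i) 2 volume ≤ S := by
        intro i _
        rw [hh]
        dsimp only
        split_ifs
        · rw [hNv, hS]; exact le_add_self
        · rw [hNuv, hE, hS]
          exact_mod_cast nnnorm_sub_le _ _
        · rw [hNu, hS]; exact self_le_add_right _ _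
      calc (∏ i ∈ Finset.univ.erase j, eLpNorm (h j i) 2 volume) * eLpNorm (h j j) 2 volume
          ≤ (∏ _i ∈ Finset.univ.erase j, S) * E :=
            mul_le_mul' (Finset.prod_le_prod' hne) (le_of_eq hj)
      _ = E * S ^ (k - 1) := by
          rw [Finset.prod_const, Finset.card_erase_of_mem (Finset.mem_univ j),
            Finset.card_univ, Fintype.card_fin, mul_comm]
    calc ∑ j : Fin k, eLpNorm (fun x : Fin k → ℝ => ∏ i, h j i (x i)) 2 volume
        ≤ ∑ _j : Fin k, E * S ^ (k - 1) := Finset.sum_le_sum fun j _ => h4 j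
    _ = (k : ℝ≥0∞) * E * S ^ (k - 1) := by
        rw [Finset.sum_const, Finset.card_univ, Fintype.card_fin, nsmul_eq_mul, mul_assoc]
  -- conclude
  refine le_trans (traceNorm_rankOne_diff_le U V) ?_
  rw [hUnorm, hVnorm]
  calc (‖U - V‖₊ : ℝ≥0∞) * ((‖u‖₊ : ℝ≥0∞) ^ k + (‖v‖₊ : ℝ≥0∞) ^ k)
      ≤ ((k : ℝ≥0∞) * E * S ^ (k - 1)) * (S ^ k + S ^ k) := by
        gcongr
        · exact self_le_add_right _ _
        · exact le_add_self
  _ = (2 : ℝ≥0∞) * (k : ℝ≥0∞) * E * (S ^ (k - 1) * S ^ k) := by ring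
  _ = (2 : ℝ≥0∞) * (k : ℝ≥0∞) * E * S ^ (2 * k - 1) := by
      rw [← pow_add, show k - 1 + k = 2 * k - 1 from by omega]
  _ = _ := by norm_num

end
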